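/- Let d be even, k = (d+2)/2, and let {f_i}_{i=1}^{d+1} ⊂ R^d be a simplex ETF with ⟨f_i, f_j⟩ = -1/d for i ≠ j. For any subset Λ of size k, the vector g = (Σ_{i∈Λ} f_i)/||Σ_{i∈Λ} f_i|| satisfies max_{1 ≤ j ≤ d+1} |⟨g, f_j⟩| ≤ sqrt((d+2)/d^2). -/

import Mathlib

/-- For `d` even and `k = (d+2)/2`, the normalized sum `g` of any `k` vectors of a
simplex ETF in `ℝ^d` satisfies `max_j |⟨g, f_j⟩| ≤ √((d+2)/d²)`. -/
theorem max_coherence_normalized_sum_even (d k : ℕ) (hd : 0 < d) (heven : Even d)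
    (hk : 2 * k = d + 2)
    (f : Fin (d + 1) → EuclideanSpace ℝ (Fin d))
    (hnorm : ∀ i, ‖f i‖ = 1)
    (hangle : ∀ i j, i ≠ j → (inner ℝ (f i) (f j) : ℝ) = -1 / d)
    (Λ : Finset (Fin (d + 1))) (hcard : Λ.card = k)
    (g : EuclideanSpace ℝ (Fin d)) (hg : g = ‖∑ i ∈ Λ, f i‖⁻¹ • ∑ i ∈ Λ, f i) :
    ∀ j : Fin (d + 1),
      |(inner ℝ g (f j) : ℝ)| ≤ Real.sqrt (((d : ℝ) + 2) / (d : ℝ) ^ 2) := by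
  intro j
  set S := ∑ i ∈ Λ, f i with hS
  have hd0 : (0:ℝ) < d := by exact_mod_cast hd
  have hkR : (2:ℝ) * k = d + 2 := by exact_mod_cast hk
  have hk1 : 1 ≤ k := by omega
  have hip : ∀ j : Fin (d+1), (inner ℝ S (f j) : ℝ) =
      if j ∈ Λ then 1/2 else -((d:ℝ)+2)/(2*d) := by
    intro j
    rw [hS, sum_inner]
    by_cases hj : j ∈ Λ
    · rw [← Finset.add_sum_erase _ _ hj, if_pos hj]
      have h1 : (inner ℝ (f j) (f j) : ℝ) = 1 := by
        rw [real_inner_self_eq_norm_sq, hnorm]; norm_num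
      have h2 : ∑ i ∈ Λ.erase j, (inner ℝ (f i) (f j) : ℝ) = (k-1 : ℕ) * (-1/d) := by
        rw [Finset.sum_congr rfl fun i hi => hangle i j (Finset.ne_of_mem_erase hi)]
        rw [Finset.sum_const, Finset.card_erase_of_mem hj, hcard, nsmul_eq_mul]
      rw [h1, h2]
      have : ((k-1:ℕ):ℝ) = (k:ℝ) - 1 := by
        push_cast [Nat.cast_sub hk1]; ring
      rw [this]
      field_simp
      nlinarith [hkR]
    · rw [if_neg hj]
      rw [Finset.sum_congr rfl fun i hi => hangle i j (by rintro rfl; exact hj hi)]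
      rw [Finset.sum_const, hcard, nsmul_eq_mul]
      field_simp
      nlinarith [hkR]
  have hSS : (inner ℝ S S : ℝ) = ((d:ℝ)+2)/4 := by
    nth_rewrite 2 [hS]
    rw [inner_sum, Finset.sum_congr rfl fun i hi => (hip i).trans (if_pos hi),
      Finset.sum_const, hcard, nsmul_eq_mul]
    nlinarith [hkR]
  have hnormS : ‖S‖ = Real.sqrt ((d+2)/4) := by
    rw [← hSS, real_inner_self_eq_norm_sq, Real.sqrt_sq (norm_nonneg S)]
  have hsq2 : (0:ℝ) < Real.sqrt ((d+2)/4) := Real.sqrt_pos.mpr (by linarith)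
  have hSpos : 0 < ‖S‖ := hnormS ▸ hsq2
  have hgj : (inner ℝ g (f j) : ℝ) = ‖S‖⁻¹ * inner ℝ S (f j) := by
    rw [hg, real_inner_smul_left]
  have habs : |(inner ℝ S (f j) : ℝ)| ≤ ((d:ℝ)+2)/(2*d) := by
    rw [hip j]
    split_ifs
    · rw [abs_of_nonneg (by norm_num)]
      rw [div_le_div_iff₀ (by norm_num) (by linarith)]; linarith
    · rw [abs_of_nonpos (by apply div_nonpos_of_nonpos_of_nonneg <;> nlinarith)]
      rw [neg_div, neg_neg]
  have key : ‖S‖⁻¹ * (((d:ℝ)+2)/(2*d)) = Real.sqrt (((d:ℝ)+2)/(d:ℝ)^2) := by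
    rw [hnormS]
    have h4 : Real.sqrt ((d+2)/4) = Real.sqrt (d+2) / 2 := by
      rw [Real.sqrt_div (by linarith), show (4:ℝ) = 2^2 by norm_num,
        Real.sqrt_sq (by norm_num)]
    have h5 : Real.sqrt (((d:ℝ)+2)/(d:ℝ)^2) = Real.sqrt (d+2) / d := by
      rw [Real.sqrt_div (by linarith), Real.sqrt_sq hd0.le]
    have hs2 : Real.sqrt ((d:ℝ)+2) ^ 2 = d + 2 := Real.sq_sqrt (by linarith)
    have hspos : 0 < Real.sqrt ((d:ℝ)+2) := Real.sqrt_pos.mpr (by linarith)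
    rw [h4, h5, inv_div, div_mul_div_comm,
      div_eq_div_iff (by positivity) hd0.ne']
    linear_combination (-2*(d:ℝ)) * hs2
  calc |(inner ℝ g (f j) : ℝ)| = ‖S‖⁻¹ * |(inner ℝ S (f j) : ℝ)| := by
        rw [hgj, abs_mul, abs_of_nonneg (inv_nonneg.mpr (norm_nonneg S))]
    _ ≤ ‖S‖⁻¹ * (((d:ℝ)+2)/(2*d)) := by
        apply mul_le_mul_of_nonneg_left habs (inv_nonneg.mpr (norm_nonneg S))
    _ = _ := key
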